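/- Let f : ℝ → ℝ be continuously differentiable and (L,p)-Hölder smooth for some L ≥ 0, p > 0; let α ∈ (0,1) and x, c ∈ ℝ with x ≠ c, and set K = L(1−α)/(1+p−α). Then |f′(x)·|x−c|^{1−p} − δ̂^{α,p}_c f(x)| ≤ K·|x−c|. -/

import Mathlib

/-- The Caputo fractional derivative of order `α ∈ (0,1)` with terminal `c`. -/
noncomputable def caputo (α c : ℝ) (f : ℝ → ℝ) (x : ℝ) : ℝ :=
  (1 / Real.Gamma (1 - α)) * ∫ t in c..x, deriv f t / |x - t| ^ α

/-- The `p`-fractional gradient operator `δ̂^{α,p}_c f (x)`, with the convention that it is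
`0` when `x = c`. -/
noncomputable def pFracGrad (α p c : ℝ) (f : ℝ → ℝ) (x : ℝ) : ℝ :=
  if x = c then 0
  else (Real.Gamma (2 - α) * |x - c| ^ (α - p + 1) / (x - c)) * caputo α c f x

/-- `f : ℝ → ℝ` is `(L,p)`-Hölder smooth. -/
def HolderSmooth (L p : ℝ) (f : ℝ → ℝ) : Prop :=
  ∀ x y : ℝ, |f y - f x - deriv f x * (y - x)| ≤ L / (1 + p) * |y - x| ^ (1 + p)

open MeasureTheory intervalIntegral Set Filter Topology

lemma myIntegrableRpow {r : ℝ} (hr : -1 < r) (x c b : ℝ) :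
    IntervalIntegrable (fun t => (x - t) ^ r) volume c b := by
  simpa using (intervalIntegrable_rpow' (a := x - c) (b := x - b) hr).comp_sub_left x

lemma myIntegralRpow {r : ℝ} (hr : -1 < r) (x c b : ℝ) :
    ∫ t in c..b, (x - t) ^ r = ((x - c) ^ (r + 1) - (x - b) ^ (r + 1)) / (r + 1) := by
  rw [intervalIntegral.integral_comp_sub_left (fun u => u ^ r) x]
  exact integral_rpow (Or.inl hr)

lemma core (f : ℝ → ℝ) (hf : ContDiff ℝ 1 f) (L p : ℝ) (hL : 0 ≤ L) (hp : 0 < p)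
    (hsmooth : HolderSmooth L p f) (α : ℝ) (hα : α ∈ Set.Ioo (0 : ℝ) 1) (c x : ℝ)
    (hcx : c < x) :
    |∫ t in c..x, (deriv f t - deriv f x) * (x - t) ^ (-α)| ≤
      L / (1 + p - α) * (x - c) ^ (1 + p - α) := by
  obtain ⟨hα0, hα1⟩ := hα
  have hq : (0 : ℝ) < 1 + p - α := by linarith
  have hrα : (-1 : ℝ) < -α := by linarith
  have hrpα : (-1 : ℝ) < p - α := by linarith
  set q : ℝ := 1 + p - α with hqdef
  set M : ℝ := L / (1 + p) with hMdef
  have hM : 0 ≤ M := div_nonneg hL (by linarith)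
  set g : ℝ → ℝ := fun t => f t - f x - deriv f x * (t - x) with hgdef
  have hd : Differentiable ℝ f := hf.differentiable one_ne_zero
  have hdc : Continuous (deriv f) := hf.continuous_deriv le_rfl
  have hgd : ∀ t, HasDerivAt g (deriv f t - deriv f x) t := by
    intro t
    have h1 : HasDerivAt (fun t => f t - f x) (deriv f t) t := (hd t).hasDerivAt.sub_const _
    have h2 : HasDerivAt (fun t => deriv f x * (t - x)) (deriv f x) t := by
      simpa using ((hasDerivAt_id t).sub_const x).const_mul (deriv f x)
    exact h1.sub h2
  have hgb : ∀ t, |g t| ≤ M * |t - x| ^ (1 + p) := fun t => hsmooth x t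
  have hgc : Continuous g := by
    exact (hf.continuous.sub continuous_const).sub
      (continuous_const.mul (continuous_id.sub continuous_const))
  set Φ : ℝ → ℝ := fun b => ∫ t in c..b, (deriv f t - deriv f x) * (x - t) ^ (-α) with hΦdef
  have hI : IntervalIntegrable (fun t => (deriv f t - deriv f x) * (x - t) ^ (-α)) volume c x :=
    (myIntegrableRpow hrα x c x).continuousOn_mul (hdc.sub continuous_const).continuousOn
  have hΦcont : ContinuousOn Φ (Set.uIcc c x) :=
    intervalIntegral.continuousOn_primitive_interval' hI left_mem_uIcc
  have htends : Tendsto Φ (𝓝[Set.Ioo c x] x) (𝓝 (Φ x)) := by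
    have h1 : Tendsto Φ (𝓝[Set.uIcc c x] x) (𝓝 (Φ x)) := hΦcont x right_mem_uIcc
    exact h1.mono_left (nhdsWithin_mono x (by rw [Set.uIcc_of_le hcx.le]; exact Set.Ioo_subset_Icc_self))
  set B : ℝ → ℝ := fun b =>
    M * (x - b) ^ q + M * (x - c) ^ q + α * M / q * ((x - c) ^ q - (x - b) ^ q) with hBdef
  have h0 : Tendsto (fun b => (x - b) ^ q) (𝓝[Set.Ioo c x] x) (𝓝 0) := by
    have h1 : Tendsto (fun b : ℝ => x - b) (𝓝[Set.Ioo c x] x) (𝓝 0) := by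
      have h1' : Tendsto (fun b : ℝ => x - b) (𝓝 x) (𝓝 (x - x)) :=
        ((continuous_const.sub continuous_id).tendsto x)
      rw [sub_self] at h1'
      exact h1'.mono_left nhdsWithin_le_nhds
    have h2 : ContinuousAt (fun u : ℝ => u ^ q) 0 :=
      Real.continuousAt_rpow_const 0 q (Or.inr hq.le)
    have := h2.tendsto.comp h1
    simpa [Real.zero_rpow hq.ne', Function.comp_def] using this
  have hB : Tendsto B (𝓝[Set.Ioo c x] x)
      (𝓝 (M * 0 + M * (x - c) ^ q + α * M / q * ((x - c) ^ q - 0))) :=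
    ((h0.const_mul M).add tendsto_const_nhds).add ((tendsto_const_nhds.sub h0).const_mul (α * M / q))
  have hbound : ∀ b ∈ Set.Ioo c x, |Φ b| ≤ B b := by
    intro b hb
    obtain ⟨hcb, hbx⟩ := hb
    have huIcc : Set.uIcc c b = Set.Icc c b := Set.uIcc_of_le hcb.le
    -- derivative of h t = g t * (x - t) ^ (-α) on [c, b]
    have hder : ∀ t ∈ Set.uIcc c b, HasDerivAt (fun u => g u * (x - u) ^ (-α))
        ((deriv f t - deriv f x) * (x - t) ^ (-α) + g t * (α * (x - t) ^ (-α - 1))) t := by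
      intro t ht
      rw [huIcc] at ht
      have hne : x - t ≠ 0 := ne_of_gt (by linarith [ht.2])
      have h1 : HasDerivAt (fun u : ℝ => x - u) (-1) t := (hasDerivAt_id t).const_sub x
      have h2 := (Real.hasDerivAt_rpow_const (x := x - t) (p := -α) (Or.inl hne)).comp t h1
      have h3 := (hgd t).mul h2
      refine h3.congr_deriv ?_
      simp only [Function.comp_apply]; ring
    have hxpos : ∀ t ∈ Set.uIcc c b, x - t ≠ 0 := by
      intro t ht
      rw [huIcc] at ht
      exact ne_of_gt (by linarith [ht.2])
    have hrpow1 : ContinuousOn (fun t : ℝ => (x - t) ^ (-α)) (Set.uIcc c b) :=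
      ContinuousOn.rpow_const (continuous_const.sub continuous_id').continuousOn
        (fun t ht => Or.inl (hxpos t ht))
    have hrpow2 : ContinuousOn (fun t : ℝ => (x - t) ^ (-α - 1)) (Set.uIcc c b) :=
      ContinuousOn.rpow_const (continuous_const.sub continuous_id').continuousOn
        (fun t ht => Or.inl (hxpos t ht))
    have hintA : IntervalIntegrable (fun t => (deriv f t - deriv f x) * (x - t) ^ (-α)) volume c b :=
      (((hdc.sub continuous_const).continuousOn).mul hrpow1).intervalIntegrable
    have hintB : IntervalIntegrable (fun t => g t * (α * (x - t) ^ (-α - 1))) volume c b :=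
      ((hgc.continuousOn).mul (continuousOn_const.mul hrpow2)).intervalIntegrable
    have hftc := intervalIntegral.integral_eq_sub_of_hasDerivAt hder (hintA.add hintB)
    rw [intervalIntegral.integral_add hintA hintB] at hftc
    have hΦb : Φ b = (g b * (x - b) ^ (-α) - g c * (x - c) ^ (-α))
        - ∫ t in c..b, g t * (α * (x - t) ^ (-α - 1)) := by
      simp only [hΦdef]
      linarith [hftc]
    -- term bounds
    have habs : ∀ u : ℝ, u < x → |g u * (x - u) ^ (-α)| ≤ M * (x - u) ^ q := by
      intro u hu
      have hxu : (0 : ℝ) < x - u := by linarith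
      rw [abs_mul, abs_of_nonneg (Real.rpow_nonneg hxu.le _)]
      calc |g u| * (x - u) ^ (-α) ≤ (M * |u - x| ^ (1 + p)) * (x - u) ^ (-α) := by
            apply mul_le_mul_of_nonneg_right (hgb u) (Real.rpow_nonneg hxu.le _)
        _ = M * (x - u) ^ q := by
            rw [abs_sub_comm, abs_of_pos hxu]
            have e : (x - u) ^ (1 + p) * (x - u) ^ (-α) = (x - u) ^ q := by
              rw [← Real.rpow_add hxu]
              congr 1
              all_goals (rw [hqdef]; try ring)
            calc M * (x - u) ^ (1 + p) * (x - u) ^ (-α)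
                = M * ((x - u) ^ (1 + p) * (x - u) ^ (-α)) := by ring
              _ = M * (x - u) ^ q := by rw [e]
    have t3 : |∫ t in c..b, g t * (α * (x - t) ^ (-α - 1))|
        ≤ α * M / q * ((x - c) ^ q - (x - b) ^ q) := by
      have hptw : ∀ᵐ t ∂volume.restrict (Set.uIoc c b),
          ‖g t * (α * (x - t) ^ (-α - 1))‖ ≤ α * M * (x - t) ^ (p - α) := by
        apply ae_restrict_of_forall_mem measurableSet_uIoc
        intro t ht
        rw [Set.uIoc_of_le hcb.le] at ht
        have hxt : (0 : ℝ) < x - t := by linarith [ht.2]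
        rw [Real.norm_eq_abs, abs_mul, abs_mul, abs_of_pos hα0,
          abs_of_nonneg (Real.rpow_nonneg hxt.le _)]
        calc |g t| * (α * (x - t) ^ (-α - 1))
            ≤ (M * |t - x| ^ (1 + p)) * (α * (x - t) ^ (-α - 1)) := by
              apply mul_le_mul_of_nonneg_right (hgb t)
              positivity
          _ = α * M * (x - t) ^ (p - α) := by
              rw [abs_sub_comm, abs_of_pos hxt]
              have e : (x - t) ^ (1 + p) * (x - t) ^ (-α - 1) = (x - t) ^ (p - α) := by
                rw [← Real.rpow_add hxt]
                congr 1
                ring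
              calc M * (x - t) ^ (1 + p) * (α * (x - t) ^ (-α - 1))
                  = α * M * ((x - t) ^ (1 + p) * (x - t) ^ (-α - 1)) := by ring
                _ = α * M * (x - t) ^ (p - α) := by rw [e]
      have hib : IntervalIntegrable (fun t => α * M * (x - t) ^ (p - α)) volume c b :=
        (myIntegrableRpow hrpα x c b).const_mul (α * M)
      have := intervalIntegral.norm_integral_le_of_norm_le hcb.le ((ae_restrict_iff' measurableSet_Ioc).mp (by rwa [Set.uIoc_of_le hcb.le] at hptw)) hib
      rw [Real.norm_eq_abs] at this
      refine this.trans ?_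
      rw [intervalIntegral.integral_const_mul, myIntegralRpow hrpα,
        show p - α + 1 = q by rw [hqdef]; ring]
      have hle : (x - b) ^ q ≤ (x - c) ^ q :=
        Real.rpow_le_rpow (by linarith) (by linarith) hq.le
      have h9 : 0 ≤ ((x - c) ^ q - (x - b) ^ q) / q := div_nonneg (by linarith) hq.le
      exact le_of_eq (by ring)
    calc |Φ b| ≤ |g b * (x - b) ^ (-α) - g c * (x - c) ^ (-α)|
          + |∫ t in c..b, g t * (α * (x - t) ^ (-α - 1))| := by
          rw [hΦb]; exact abs_sub _ _
      _ ≤ (|g b * (x - b) ^ (-α)| + |g c * (x - c) ^ (-α)|)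
          + |∫ t in c..b, g t * (α * (x - t) ^ (-α - 1))| := by
          exact add_le_add_left (abs_sub _ _) _
      _ ≤ (M * (x - b) ^ q + M * (x - c) ^ q) + α * M / q * ((x - c) ^ q - (x - b) ^ q) := by
          exact add_le_add (add_le_add (habs b hbx) (habs c hcx)) t3
      _ = B b := by rw [hBdef]
  haveI : (𝓝[Set.Ioo c x] x).NeBot := by
    rw [nhdsWithin_Ioo_eq_nhdsLT hcx]; infer_instance
  have key : |Φ x| ≤ M * 0 + M * (x - c) ^ q + α * M / q * ((x - c) ^ q - 0) :=
    le_of_tendsto_of_tendsto htends.abs hB (eventually_nhdsWithin_of_forall hbound)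
  refine key.trans (le_of_eq ?_)
  have h1p : (1 : ℝ) + p ≠ 0 := by positivity
  rw [hMdef]
  field_simp
  ring

lemma main_lt (f : ℝ → ℝ) (hf : ContDiff ℝ 1 f) (L p : ℝ) (hL : 0 ≤ L) (hp : 0 < p)
    (hsmooth : HolderSmooth L p f) (α : ℝ) (hα : α ∈ Set.Ioo (0 : ℝ) 1) (x c : ℝ)
    (hcx : c < x) :
    |deriv f x * |x - c| ^ (1 - p) - pFracGrad α p c f x| ≤
      L * (1 - α) / (1 + p - α) * |x - c| := by
  obtain ⟨hα0, hα1⟩ := hα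
  have hq : (0 : ℝ) < 1 + p - α := by linarith
  have hs : (0 : ℝ) < x - c := by linarith
  have hne : x ≠ c := ne_of_gt hcx
  have hrα : (-1 : ℝ) < -α := by linarith
  have h1α : (0 : ℝ) < 1 - α := by linarith
  have hdc : Continuous (deriv f) := hf.continuous_deriv le_rfl
  set R : ℝ := ∫ t in c..x, (deriv f t - deriv f x) * (x - t) ^ (-α) with hRdef
  have hR : |R| ≤ L / (1 + p - α) * (x - c) ^ (1 + p - α) :=
    core f hf L p hL hp hsmooth α ⟨hα0, hα1⟩ c x hcx
  -- rewrite the caputo integral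
  have hintA : IntervalIntegrable (fun t => (deriv f t - deriv f x) * (x - t) ^ (-α)) volume c x :=
    (myIntegrableRpow hrα x c x).continuousOn_mul (hdc.sub continuous_const).continuousOn
  have hintB : IntervalIntegrable (fun t => deriv f x * (x - t) ^ (-α)) volume c x :=
    (myIntegrableRpow hrα x c x).const_mul (deriv f x)
  have hcongr : Set.EqOn (fun t => deriv f t / |x - t| ^ α)
      (fun t => (deriv f t - deriv f x) * (x - t) ^ (-α) + deriv f x * (x - t) ^ (-α))
      (Set.uIcc c x) := by
    intro t ht
    rw [Set.uIcc_of_le hcx.le] at ht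
    have h1 : |x - t| = x - t := abs_of_nonneg (by linarith [ht.2])
    simp only
    rw [h1, Real.rpow_neg (by linarith [ht.2]), div_eq_mul_inv]
    ring
  have hIcap : (∫ t in c..x, deriv f t / |x - t| ^ α)
      = R + deriv f x * ((x - c) ^ (1 - α) / (1 - α)) := by
    rw [intervalIntegral.integral_congr hcongr,
      intervalIntegral.integral_add hintA hintB, hRdef]
    congr 1
    rw [intervalIntegral.integral_const_mul, myIntegralRpow hrα]
    rw [show -α + 1 = 1 - α by ring, sub_self, Real.zero_rpow (ne_of_gt h1α), sub_zero]
  -- Gamma manipulation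
  have hΓpos : 0 < Real.Gamma (1 - α) := Real.Gamma_pos_of_pos h1α
  have hΓ : Real.Gamma (2 - α) = (1 - α) * Real.Gamma (1 - α) := by
    rw [show (2 : ℝ) - α = (1 - α) + 1 by ring, Real.Gamma_add_one (ne_of_gt h1α)]
  have habs : |x - c| = x - c := abs_of_pos hs
  -- rpow identities
  have e1 : (x - c) ^ (α - p + 1) = (x - c) ^ (α - p) * (x - c) := by
    exact Real.rpow_add_one hs.ne' _
  have e2 : (x - c) ^ (α - p) * (x - c) ^ (1 - α) = (x - c) ^ (1 - p) := by
    rw [← Real.rpow_add hs]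
    congr 1
    ring
  have e3 : (x - c) ^ (α - p) * (x - c) ^ (1 + p - α) = x - c := by
    rw [← Real.rpow_add hs, show α - p + (1 + p - α) = 1 by ring, Real.rpow_one]
  have expand : pFracGrad α p c f x
      = (1 - α) * (x - c) ^ (α - p) * R + deriv f x * (x - c) ^ (1 - p) := by
    rw [pFracGrad, if_neg hne, caputo, hIcap, hΓ, habs, e1]
    have hΓne : Real.Gamma (1 - α) ≠ 0 := ne_of_gt hΓpos
    field_simp
    rw [← e2]
    ring
  rw [expand, habs]
  have : deriv f x * (x - c) ^ (1 - p)
      - ((1 - α) * (x - c) ^ (α - p) * R + deriv f x * (x - c) ^ (1 - p))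
      = -((1 - α) * (x - c) ^ (α - p) * R) := by ring
  rw [this, abs_neg, abs_mul, abs_of_nonneg (by positivity : 0 ≤ (1 - α) * (x - c) ^ (α - p))]
  calc (1 - α) * (x - c) ^ (α - p) * |R|
      ≤ (1 - α) * (x - c) ^ (α - p) * (L / (1 + p - α) * (x - c) ^ (1 + p - α)) := by
        apply mul_le_mul_of_nonneg_left hR (by positivity)
    _ = L * (1 - α) / (1 + p - α) * ((x - c) ^ (α - p) * (x - c) ^ (1 + p - α)) := by ring
    _ = L * (1 - α) / (1 + p - α) * (x - c) := by rw [e3]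

/-- approximation of the `p`-fractional gradient operator by the first
derivative for `(L,p)`-Hölder smooth functions. -/
theorem pFracGrad_approx (f : ℝ → ℝ) (hf : ContDiff ℝ 1 f) (L p : ℝ) (hL : 0 ≤ L)
    (hp : 0 < p) (hsmooth : HolderSmooth L p f) (α : ℝ) (hα : α ∈ Set.Ioo (0 : ℝ) 1)
    (x c : ℝ) (hxc : x ≠ c) (K : ℝ) (hK : K = L * (1 - α) / (1 + p - α)) :
    |deriv f x * |x - c| ^ (1 - p) - pFracGrad α p c f x| ≤ K * |x - c| := by

  subst hK
  rcases lt_or_gt_of_ne hxc.symm with hcx | hcx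
  · exact main_lt f hf L p hL hp hsmooth α hα x c hcx
  · -- x < c : reflect
    set F : ℝ → ℝ := fun t => -f (2 * x - t) with hFdef
    have hd : Differentiable ℝ f := hf.differentiable one_ne_zero
    have hFd : ∀ t, HasDerivAt F (deriv f (2 * x - t)) t := by
      intro t
      have h1 : HasDerivAt (fun t : ℝ => 2 * x - t) (-1) t := (hasDerivAt_id t).const_sub (2 * x)
      have h2 := ((hd (2 * x - t)).hasDerivAt.comp t h1).neg
      exact h2.congr_deriv (by ring)
    have hFderiv : ∀ t, deriv F t = deriv f (2 * x - t) := fun t => (hFd t).deriv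
    have hFC : ContDiff ℝ 1 F := (hf.comp ((contDiff_const (c := 2 * x)).sub contDiff_id)).neg
    have hFs : HolderSmooth L p F := by
      intro a b
      rw [hFderiv a]
      have h := hsmooth (2 * x - a) (2 * x - b)
      have e : F b - F a - deriv f (2 * x - a) * (b - a)
          = -(f (2 * x - b) - f (2 * x - a) - deriv f (2 * x - a) * (2 * x - b - (2 * x - a))) := by
        simp only [hFdef]
        ring
      rw [e, abs_neg]
      refine h.trans (le_of_eq ?_)
      rw [show 2 * x - b - (2 * x - a) = -(b - a) by ring, abs_neg]
    have hc' : 2 * x - c < x := by linarith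
    have hne1 : x ≠ 2 * x - c := by intro h; apply hxc; linarith [h]
    have hcap : caputo α (2 * x - c) F x = -caputo α c f x := by
      rw [caputo, caputo]
      have hfun : (fun t => deriv F t / |x - t| ^ α)
          = fun t => (fun u => deriv f u / |x - u| ^ α) (2 * x - t) := by
        funext t
        simp only
        rw [hFderiv t, show x - (2 * x - t) = -(x - t) by ring, abs_neg]
      rw [hfun, intervalIntegral.integral_comp_sub_left (fun u => deriv f u / |x - u| ^ α) (2 * x),
        show 2 * x - x = x by ring, show 2 * x - (2 * x - c) = c by ring,
        intervalIntegral.integral_symm]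
      ring
    have hpf : pFracGrad α p (2 * x - c) F x = pFracGrad α p c f x := by
      rw [pFracGrad, pFracGrad, if_neg hne1, if_neg hxc, hcap,
        show x - (2 * x - c) = -(x - c) by ring, abs_neg, div_neg]
      ring
    have := main_lt F hFC L p hL hp hFs α hα x (2 * x - c) hc'
    rw [hpf, hFderiv x, show 2 * x - x = x by ring,
      show x - (2 * x - c) = -(x - c) by ring, abs_neg] at this
    exact this
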